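/- Let M be a matroid with bi-objective integer weights and suppose distinct supported bases have distinct images under w = (w₁, w₂). Then the set of supported bases is 2-Hamming connected: for any two supported bases x, y there exists a sequence x = z₁, z₂, ..., z_h = y of supported bases with |z_i Δ z_{i+1}| = 2 for all i. -/

import Mathlib

/-- A base is supported if it minimizes the scalarization `(1−λ)w₁ + λw₂` over all bases
for some `λ ∈ [0,1]`. -/
def SupportedBase {α : Type*} (M : Matroid α) (w₁ w₂ : α → ℤ) (x : Set α) : Prop :=
  M.IsBase x ∧ ∃ lam : ℝ, lam ∈ Set.Icc (0:ℝ) 1 ∧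
    ∀ y : Set α, M.IsBase y →
      (∑ᶠ e ∈ x, ((1 - lam) * (w₁ e : ℝ) + lam * (w₂ e : ℝ))) ≤
        ∑ᶠ e ∈ y, ((1 - lam) * (w₁ e : ℝ) + lam * (w₂ e : ℝ))

section Aux

variable {α : Type*} [Fintype α]

/-- The scalarized weight of a single element. -/
noncomputable def cw (w₁ w₂ : α → ℤ) (l : ℝ) (e : α) : ℝ :=
  (1 - l) * (w₁ e : ℝ) + l * (w₂ e : ℝ)

/-- The scalarized weight of a set. -/
noncomputable def bval (w₁ w₂ : α → ℤ) (l : ℝ) (B : Set α) : ℝ :=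
  ∑ᶠ e ∈ B, cw w₁ w₂ l e

lemma finsum_mem_set_eq (g : α → ℝ) (B : Set α) :
    ∑ᶠ x ∈ B, g x = ∑ x ∈ B.toFinite.toFinset, g x := by
  calc ∑ᶠ x ∈ B, g x = ∑ᶠ x ∈ (↑B.toFinite.toFinset : Set α), g x := by
        rw [Set.Finite.coe_toFinset]
    _ = ∑ x ∈ B.toFinite.toFinset, g x := finsum_mem_coe_finset _ _

lemma finsum_exchange (g : α → ℝ) {B : Set α} {e f : α} (he : e ∈ B) (hf : f ∉ B) :
    ∑ᶠ x ∈ insert f (B \ {e}), g x = (∑ᶠ x ∈ B, g x) - g e + g f := by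
  classical
  have hset : insert f (B \ {e}) = (↑(insert f (B.toFinite.toFinset.erase e)) : Set α) := by
    ext x
    simp only [Set.mem_insert_iff, Set.mem_diff, Set.mem_singleton_iff, Finset.coe_insert,
      Finset.mem_erase, Set.Finite.mem_toFinset, Finset.mem_coe]
    constructor
    · rintro (rfl | ⟨h1, h2⟩)
      · exact Or.inl rfl
      · exact Or.inr ⟨h2, h1⟩
    · rintro (rfl | ⟨h1, h2⟩)
      · exact Or.inl rfl
      · exact Or.inr ⟨h2, h1⟩
  have hfe : f ∉ B.toFinite.toFinset.erase e := by
    simp only [Finset.mem_erase, Set.Finite.mem_toFinset]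
    exact fun h => hf h.2
  have heB : e ∈ B.toFinite.toFinset := (Set.Finite.mem_toFinset _).mpr he
  have h2 := Finset.add_sum_erase B.toFinite.toFinset g heB
  rw [hset, finsum_mem_coe_finset, Finset.sum_insert hfe, finsum_mem_set_eq]
  linarith

lemma bval_exchange (w₁ w₂ : α → ℤ) (l : ℝ) {B : Set α} {e f : α}
    (he : e ∈ B) (hf : f ∉ B) :
    bval w₁ w₂ l (insert f (B \ {e})) = bval w₁ w₂ l B - cw w₁ w₂ l e + cw w₁ w₂ l f :=
  finsum_exchange _ he hf

/-- `B` is a minimum-weight base for the scalarization at `l`. -/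
def MinAt (M : Matroid α) (w₁ w₂ : α → ℤ) (l : ℝ) (B : Set α) : Prop :=
  M.IsBase B ∧ ∀ B', M.IsBase B' → bval w₁ w₂ l B ≤ bval w₁ w₂ l B'

lemma MinAt.supported {M : Matroid α} {w₁ w₂ : α → ℤ} {l : ℝ} {B : Set α}
    (hl : l ∈ Set.Icc (0:ℝ) 1) (h : MinAt M w₁ w₂ l B) : SupportedBase M w₁ w₂ B :=
  ⟨h.1, l, hl, h.2⟩

/-- Connectivity by single exchanges through supported bases. -/
def Conn (M : Matroid α) (w₁ w₂ : α → ℤ) (a b : Set α) : Prop :=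
  ∃ (h : ℕ) (z : ℕ → Set α), z 0 = a ∧ z h = b ∧
    (∀ i ≤ h, SupportedBase M w₁ w₂ (z i)) ∧
    (∀ i < h, (symmDiff (z i) (z (i + 1))).ncard = 2)

variable {M : Matroid α} {w₁ w₂ : α → ℤ}

lemma conn_refl {a : Set α} (ha : SupportedBase M w₁ w₂ a) : Conn M w₁ w₂ a a :=
  ⟨0, fun _ => a, rfl, rfl, fun _ _ => ha, fun i hi => absurd hi (Nat.not_lt_zero i)⟩

lemma conn_snoc {a b b' : Set α} (hab : Conn M w₁ w₂ a b)
    (hb' : SupportedBase M w₁ w₂ b') (hd : (symmDiff b b').ncard = 2) :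
    Conn M w₁ w₂ a b' := by
  obtain ⟨h, z, h0, hh, hs, hst⟩ := hab
  refine ⟨h + 1, fun i => if i ≤ h then z i else b', by simp [h0], by simp, ?_, ?_⟩
  · intro i hi
    by_cases hih : i ≤ h
    · simpa [hih] using hs i hih
    · simpa [hih] using hb'
  · intro i hi
    by_cases hih : i < h
    · have h1 : i ≤ h := hih.le
      have h2 : i + 1 ≤ h := hih
      simpa [h1, h2] using hst i hih
    · have hieq : i = h := by omega
      subst hieq
      have h1 : i ≤ i := le_refl i
      have h2 : ¬ (i + 1 ≤ i) := by omega
      simpa [h1, h2, hh] using hd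

lemma conn_trans {a b c : Set α} (hab : Conn M w₁ w₂ a b) (hbc : Conn M w₁ w₂ b c) :
    Conn M w₁ w₂ a c := by
  obtain ⟨h₁, z₁, h10, h1h, h1s, h1st⟩ := hab
  obtain ⟨h₂, z₂, h20, h2h, h2s, h2st⟩ := hbc
  refine ⟨h₁ + h₂, fun i => if i ≤ h₁ then z₁ i else z₂ (i - h₁), by simp [h10], ?_, ?_, ?_⟩
  · by_cases hc : h₁ + h₂ ≤ h₁
    · have h20' : h₂ = 0 := by omega
      subst h20'
      simpa using h1h.trans (h20.symm.trans h2h)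
    · simp [hc, h2h]
  · intro i hi
    by_cases hih : i ≤ h₁
    · simpa [hih] using h1s i hih
    · have : i - h₁ ≤ h₂ := by omega
      simpa [hih] using h2s _ this
  · intro i hi
    by_cases hih : i + 1 ≤ h₁
    · have h1 : i ≤ h₁ := by omega
      simpa [h1, hih] using h1st i (by omega)
    · by_cases hih2 : i ≤ h₁
      · have hieq : i = h₁ := by omega
        subst hieq
        have hz : z₂ (i + 1 - i) = z₂ 1 := by norm_num
        have hb : z₁ i = z₂ 0 := h1h.trans h20.symm
        have := h2st 0 (by omega)
        simpa [hih2, hih, hz, hb] using this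
      · have h1 : i + 1 - h₁ = (i - h₁) + 1 := by omega
        have := h2st (i - h₁) (by omega)
        simpa [hih2, hih, h1] using this

lemma conn_symm {a b : Set α} (hab : Conn M w₁ w₂ a b) : Conn M w₁ w₂ b a := by
  obtain ⟨h, z, h0, hh, hs, hst⟩ := hab
  refine ⟨h, fun i => z (h - i), by simp [hh], by simp [h0], ?_, ?_⟩
  · intro i _; exact hs _ (by omega)
  · intro i hi
    have h1 : h - i = (h - (i + 1)) + 1 := by omega
    have := hst (h - (i + 1)) (by omega)
    show (symmDiff (z (h - i)) (z (h - (i + 1)))).ncard = 2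
    rw [h1, symmDiff_comm]
    exact this

lemma minAt_conn_aux {l : ℝ} (hl : l ∈ Set.Icc (0:ℝ) 1) :
    ∀ n (B B' : Set α), MinAt M w₁ w₂ l B → MinAt M w₁ w₂ l B' →
      (B \ B').ncard ≤ n → Conn M w₁ w₂ B B' := by
  intro n
  induction n with
  | zero =>
    intro B B' hB hB' hcard
    have h0 : (B \ B').ncard = 0 := Nat.le_zero.mp hcard
    have hempty : B \ B' = ∅ := (Set.ncard_eq_zero (Set.toFinite _)).mp h0
    have : B = B' := hB.1.eq_of_subset_isBase hB'.1 (Set.diff_eq_empty.mp hempty)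
    subst this
    exact conn_refl (hB.supported hl)
  | succ n ih =>
    intro B B' hB hB' hcard
    by_cases hEq : B = B'
    · subst hEq; exact conn_refl (hB.supported hl)
    · have hne : (B \ B').Nonempty := by
        rw [Set.nonempty_iff_ne_empty]
        intro h0
        exact hEq (hB.1.eq_of_subset_isBase hB'.1 (Set.diff_eq_empty.mp h0))
      obtain ⟨e, heBB', hemax⟩ :=
        Set.exists_max_image (B \ B') (cw w₁ w₂ l) (Set.toFinite _) hne
      obtain ⟨f, hfB'B, hBf⟩ := hB.1.exchange hB'.1 heBB'
      have h1 : cw w₁ w₂ l e ≤ cw w₁ w₂ l f := by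
        have := hB.2 _ hBf
        rw [bval_exchange w₁ w₂ l heBB'.1 hfB'B.2] at this
        linarith
      obtain ⟨e', he'BB', hB''b⟩ := hB'.1.exchange hB.1 hfB'B
      have h2 : cw w₁ w₂ l f ≤ cw w₁ w₂ l e' := by
        have := hB'.2 _ hB''b
        rw [bval_exchange w₁ w₂ l hfB'B.1 he'BB'.2] at this
        linarith
      have h3 : cw w₁ w₂ l e' ≤ cw w₁ w₂ l e := hemax e' he'BB'
      have heq : cw w₁ w₂ l e' = cw w₁ w₂ l f := le_antisymm (h3.trans h1) h2
      set B'' := insert e' (B' \ {f}) with hB''def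
      have hvalB'' : bval w₁ w₂ l B'' = bval w₁ w₂ l B' := by
        rw [hB''def, bval_exchange w₁ w₂ l hfB'B.1 he'BB'.2, heq]; ring
      have hB''min : MinAt M w₁ w₂ l B'' :=
        ⟨hB''b, fun C hC => hvalB'' ▸ hB'.2 C hC⟩
      have hfe' : f ≠ e' := fun h => hfB'B.2 (h ▸ he'BB'.1)
      have hsq : B \ B'' = (B \ B') \ {e'} := by
        ext x
        simp only [hB''def, Set.mem_insert_iff, Set.mem_diff, Set.mem_singleton_iff]
        constructor
        · rintro ⟨hxB, hx2⟩
          have hxf : x ≠ f := fun h => hfB'B.2 (h ▸ hxB)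
          push_neg at hx2
          exact ⟨⟨hxB, fun hxB' => hxf (hx2.2 hxB')⟩, hx2.1⟩
        · rintro ⟨⟨hxB, hxB'⟩, hxe⟩
          exact ⟨hxB, fun h => h.elim hxe (fun hh => hxB' hh.1)⟩
      have hposs : 0 < (B \ B').ncard := (Set.ncard_pos (Set.toFinite _)).mpr hne
      have hcard' : (B \ B'').ncard ≤ n := by
        rw [hsq, Set.ncard_diff_singleton_of_mem he'BB']
        omega
      have hconn1 : Conn M w₁ w₂ B B'' := ih B B'' hB hB''min hcard'
      have hsd : symmDiff B'' B' = {e', f} := by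
        ext x
        simp only [Set.mem_symmDiff, hB''def, Set.mem_insert_iff, Set.mem_diff,
          Set.mem_singleton_iff]
        constructor
        · rintro (⟨h1x, h2x⟩ | ⟨h1x, h2x⟩)
          · rcases h1x with rfl | ⟨hxB', hxf⟩
            · exact Or.inl rfl
            · exact absurd hxB' h2x
          · push_neg at h2x
            right
            by_contra hxf
            exact hxf (h2x.2 h1x)
        · rintro (rfl | rfl)
          · exact Or.inl ⟨Or.inl rfl, he'BB'.2⟩
          · exact Or.inr ⟨hfB'B.1, by
              rintro (h | ⟨_, hf2⟩)
              · exact hfe' h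
              · exact hf2 rfl⟩
      have hd2 : (symmDiff B'' B').ncard = 2 := by
        rw [hsd]
        exact Set.ncard_pair (fun h => hfe' h.symm)
      exact conn_trans hconn1 (conn_snoc (conn_refl (hB''min.supported hl))
        (hB'.supported hl) hd2)

lemma minAt_conn {l : ℝ} (hl : l ∈ Set.Icc (0:ℝ) 1) {B B' : Set α}
    (hB : MinAt M w₁ w₂ l B) (hB' : MinAt M w₁ w₂ l B') : Conn M w₁ w₂ B B' :=
  minAt_conn_aux hl _ B B' hB hB' le_rfl

lemma bval_continuous (w₁ w₂ : α → ℤ) (B : Set α) :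
    Continuous fun l => bval w₁ w₂ l B := by
  have h : (fun l => bval w₁ w₂ l B)
      = fun l => ∑ x ∈ B.toFinite.toFinset, ((1 - l) * (w₁ x : ℝ) + l * (w₂ x : ℝ)) :=
    funext fun l => finsum_mem_set_eq _ _
  rw [h]
  exact continuous_finset_sum _ (fun i _ => by fun_prop)

lemma exists_stable_nhd (M : Matroid α) (w₁ w₂ : α → ℤ) (hM : ∃ B, M.IsBase B) (l : ℝ) :
    ∃ U : Set ℝ, IsOpen U ∧ l ∈ U ∧
      ∀ l' ∈ U, ∀ B, MinAt M w₁ w₂ l' B → MinAt M w₁ w₂ l B := by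
  obtain ⟨B₀, hB₀, hmin⟩ :=
    Set.exists_min_image {B | M.IsBase B} (bval w₁ w₂ l) (Set.toFinite _) hM
  set S : Set (Set α) := {B | M.IsBase B ∧ bval w₁ w₂ l B₀ < bval w₁ w₂ l B} with hS
  refine ⟨⋂ B ∈ S, {l' | bval w₁ w₂ l' B₀ < bval w₁ w₂ l' B}, ?_, ?_, ?_⟩
  · exact (Set.toFinite S).isOpen_biInter
      (fun B _ => isOpen_lt (bval_continuous w₁ w₂ B₀) (bval_continuous w₁ w₂ B))
  · exact Set.mem_iInter₂.mpr (fun B hB => hB.2)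
  · intro l' hl' B hBmin
    have hBnotS : B ∉ S := by
      intro hBS
      have h1 : bval w₁ w₂ l' B₀ < bval w₁ w₂ l' B := Set.mem_iInter₂.mp hl' B hBS
      exact absurd (hBmin.2 B₀ hB₀) (not_le.mpr h1)
    have hBle : bval w₁ w₂ l B ≤ bval w₁ w₂ l B₀ := by
      by_contra hlt
      exact hBnotS ⟨hBmin.1, not_le.mp hlt⟩
    exact ⟨hBmin.1, fun C hC => hBle.trans (hmin C hC)⟩

end Aux

/-- if distinct supported bases have distinct images under `(w₁, w₂)`, then
the set of supported bases is 2-Hamming connected: any two supported bases are linked by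
a sequence of supported bases in which consecutive ones have symmetric difference of
size exactly 2. -/
theorem supported_bases_two_hamming_connected
    {α : Type*} [Fintype α] (M : Matroid α) (w₁ w₂ : α → ℤ)
    (hdistinct : ∀ x y : Set α, SupportedBase M w₁ w₂ x → SupportedBase M w₁ w₂ y →
      x ≠ y → ((∑ᶠ e ∈ x, w₁ e), (∑ᶠ e ∈ x, w₂ e)) ≠ ((∑ᶠ e ∈ y, w₁ e), (∑ᶠ e ∈ y, w₂ e)))
    (x y : Set α) (hx : SupportedBase M w₁ w₂ x) (hy : SupportedBase M w₁ w₂ y) :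
    ∃ (h : ℕ) (z : ℕ → Set α), z 0 = x ∧ z h = y ∧
      (∀ i ≤ h, SupportedBase M w₁ w₂ (z i)) ∧
      (∀ i < h, (symmDiff (z i) (z (i + 1))).ncard = 2) := by
  obtain ⟨hxB, l₁, hl₁, hxmin⟩ := hx
  obtain ⟨hyB, l₂, hl₂, hymin⟩ := hy
  have hxMin : MinAt M w₁ w₂ l₁ x := ⟨hxB, fun B' hB' => hxmin B' hB'⟩
  have hyMin : MinAt M w₁ w₂ l₂ y := ⟨hyB, fun B' hB' => hymin B' hB'⟩
  have hMbase : ∃ B, M.IsBase B := ⟨x, hxB⟩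
  set U : Set ℝ := {l | ∀ B, MinAt M w₁ w₂ l B → Conn M w₁ w₂ x B} with hUdef
  set V : Set ℝ := {l | ∀ B, MinAt M w₁ w₂ l B → ¬ Conn M w₁ w₂ x B} with hVdef
  have hUopen : IsOpen U := by
    rw [isOpen_iff_mem_nhds]
    intro l hl
    obtain ⟨W, hWopen, hlW, hWstable⟩ := exists_stable_nhd M w₁ w₂ hMbase l
    refine Filter.mem_of_superset (hWopen.mem_nhds hlW) ?_
    intro l' hl' B hBmin
    exact hl B (hWstable l' hl' B hBmin)
  have hVopen : IsOpen V := by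
    rw [isOpen_iff_mem_nhds]
    intro l hl
    obtain ⟨W, hWopen, hlW, hWstable⟩ := exists_stable_nhd M w₁ w₂ hMbase l
    refine Filter.mem_of_superset (hWopen.mem_nhds hlW) ?_
    intro l' hl' B hBmin
    exact hl B (hWstable l' hl' B hBmin)
  have hcover : Set.Icc (0:ℝ) 1 ⊆ U ∪ V := by
    intro l hlIcc
    obtain ⟨B₀, hB₀base, hB₀min⟩ :=
      Set.exists_min_image {B | M.IsBase B} (bval w₁ w₂ l) (Set.toFinite _) hMbase
    have hB₀Min : MinAt M w₁ w₂ l B₀ := ⟨hB₀base, hB₀min⟩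
    by_cases hc : Conn M w₁ w₂ x B₀
    · left
      intro B hB
      exact conn_trans hc (minAt_conn hlIcc hB₀Min hB)
    · right
      intro B hB hconn
      exact hc (conn_trans hconn (minAt_conn hlIcc hB hB₀Min))
  have hl₁U : l₁ ∈ U := fun B hB => minAt_conn hl₁ hxMin hB
  have hl₂U : l₂ ∈ U := by
    by_contra hl₂U
    have hl₂V : l₂ ∈ V := (hcover hl₂).resolve_left hl₂U
    obtain ⟨p, hpIcc, hpU, hpV⟩ :=
      isPreconnected_Icc U V hUopen hVopen hcover ⟨l₁, hl₁, hl₁U⟩ ⟨l₂, hl₂, hl₂V⟩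
    obtain ⟨B₀, hB₀base, hB₀min⟩ :=
      Set.exists_min_image {B | M.IsBase B} (bval w₁ w₂ p) (Set.toFinite _) hMbase
    exact hpV B₀ ⟨hB₀base, hB₀min⟩ (hpU B₀ ⟨hB₀base, hB₀min⟩)
  exact hl₂U y hyMin
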